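/- Let A be an n×n complex matrix such that I − Aᴴ A is positive semidefinite of rank 1 and every eigenvalue of A lies in the open unit disc, and let C be a 1×n complex matrix with Cᴴ C = I − Aᴴ A. Let φ be a finite Blaschke product of degree d with d < n, and let x ∈ ℂⁿ be a nonzero vector with φ(Aᴴ)ᴴ φ(Aᴴ) x = x. Then for every z ∈ ℂ with |z| < 1 one has φ(z) · ( C (I − z·A)⁻¹ x ) = C (I − z·A)⁻¹ (φ(Aᴴ) x), and moreover the scalar function z ↦ C (I − z·A)⁻¹ x is not identically zero on the open unit disc, so that φ(z) = (C (I − z·A)⁻¹ φ(Aᴴ) x) / (C (I − z·A)⁻¹ x) wherever the denominator is nonzero. -/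

import Mathlib

open Matrix ComplexOrder


lemma aux_unit {n : ℕ} (A : Matrix (Fin n) (Fin n) ℂ)
    (hA : ∀ μ ∈ spectrum ℂ A, ‖μ‖ < 1) {z : ℂ} (hz : ‖z‖ < 1) :
    IsUnit (1 - z • A) := by
  rcases eq_or_ne z 0 with rfl | hz0
  · simp
  · have hmem : z⁻¹ ∉ spectrum ℂ A := by
      intro hmem
      have h1 := hA _ hmem
      rw [norm_inv] at h1
      have h2 : (0:ℝ) < ‖z‖ := norm_pos_iff.mpr hz0
      rcases inv_lt_one_iff₀.mp h1 with h | h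
      · linarith
      · linarith
    have hu : IsUnit (algebraMap ℂ (Matrix (Fin n) (Fin n) ℂ) z⁻¹ - A) :=
      spectrum.notMem_iff.mp hmem
    have key : 1 - z • A = (z • (1:Matrix (Fin n) (Fin n) ℂ)) *
        (algebraMap ℂ (Matrix (Fin n) (Fin n) ℂ) z⁻¹ - A) := by
      rw [Algebra.algebraMap_eq_smul_one]
      rw [Matrix.mul_sub]
      simp [smul_mul_assoc, smul_smul, mul_inv_cancel₀ hz0, inv_mul_cancel₀ hz0]
    rw [key]
    exact (IsUnit.smul (Units.mk0 z hz0) isUnit_one).mul hu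

lemma aux_unitH {n : ℕ} (A : Matrix (Fin n) (Fin n) ℂ)
    (hA : ∀ μ ∈ spectrum ℂ A, ‖μ‖ < 1) {c : ℂ} (hc : ‖c‖ < 1) :
    IsUnit (1 - c • Aᴴ) := by
  have h1 : IsUnit (1 - (starRingEnd ℂ c) • A) := aux_unit A hA (by simpa using hc)
  have h2 : (1 - (starRingEnd ℂ c) • A)ᴴ = 1 - c • Aᴴ := by
    simp [conjTranspose_sub, conjTranspose_smul]
  rw [← h2, Matrix.isUnit_iff_isUnit_det, Matrix.det_conjTranspose, isUnit_iff_ne_zero]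
  rw [Matrix.isUnit_iff_isUnit_det, isUnit_iff_ne_zero] at h1
  simpa using h1

lemma aux_fact {n : ℕ} (A : Matrix (Fin n) (Fin n) ℂ) (α : ℂ)
    (h1 : IsUnit (1 - α • A)) (h2 : IsUnit (1 - (starRingEnd ℂ α) • Aᴴ)) :
    1 - ((Aᴴ - α • 1) * (1 - (starRingEnd ℂ α) • Aᴴ)⁻¹)ᴴ *
        ((Aᴴ - α • 1) * (1 - (starRingEnd ℂ α) • Aᴴ)⁻¹) =
      (1 - (starRingEnd ℂ α) * α) •
        ((1 - α • A)⁻¹ * ((1 - A * Aᴴ) * (1 - (starRingEnd ℂ α) • Aᴴ)⁻¹)) := by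
  set N : Matrix (Fin n) (Fin n) ℂ := 1 - (starRingEnd ℂ α) • Aᴴ with hN
  set P : Matrix (Fin n) (Fin n) ℂ := 1 - α • A with hP
  have hNH : Nᴴ = P := by
    simp [hN, hP, conjTranspose_sub, conjTranspose_smul]
  have hd1 : IsUnit P.det := (Matrix.isUnit_iff_isUnit_det P).mp h1
  have hd2 : IsUnit N.det := (Matrix.isUnit_iff_isUnit_det N).mp h2
  have hct : ((Aᴴ - α • 1) * N⁻¹)ᴴ = P⁻¹ * (A - (starRingEnd ℂ α) • 1) := by
    rw [conjTranspose_mul, Matrix.conjTranspose_nonsing_inv, hNH]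
    simp [conjTranspose_sub, conjTranspose_smul]
  rw [hct]
  have hm : P * N - (A - (starRingEnd ℂ α) • 1) * (Aᴴ - α • 1) =
      (1 - (starRingEnd ℂ α) * α) • (1 - A * Aᴴ) := by
    simp only [hN, hP, Matrix.mul_sub, Matrix.sub_mul, Matrix.mul_one, Matrix.one_mul,
      smul_mul_assoc, mul_smul_comm, smul_smul, smul_sub, sub_smul, one_smul]
    module
  have cancelPN : ∀ X : Matrix (Fin n) (Fin n) ℂ, P⁻¹ * ((P * X * N) * N⁻¹) = X := by
    intro X
    rw [Matrix.mul_nonsing_inv_cancel_right _ _ hd2, Matrix.nonsing_inv_mul_cancel_left _ _ hd1]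
  have main : P * (1 - P⁻¹ * (A - (starRingEnd ℂ α) • 1) * ((Aᴴ - α • 1) * N⁻¹)) * N =
      P * ((1 - (starRingEnd ℂ α) * α) • (P⁻¹ * ((1 - A * Aᴴ) * N⁻¹))) * N := by
    rw [Matrix.mul_sub P 1, Matrix.mul_one, Matrix.sub_mul P (P * (P⁻¹ * (A - (starRingEnd ℂ α) • 1) * ((Aᴴ - α • 1) * N⁻¹))) N]
    have l1 : P * (P⁻¹ * (A - (starRingEnd ℂ α) • 1) * ((Aᴴ - α • 1) * N⁻¹)) * N =
        (A - (starRingEnd ℂ α) • 1) * (Aᴴ - α • 1) := by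
      simp only [Matrix.mul_assoc]
      rw [Matrix.nonsing_inv_mul _ hd2, Matrix.mul_one, Matrix.mul_nonsing_inv_cancel_left _ _ hd1]
    have l2 : P * ((1 - (starRingEnd ℂ α) * α) • (P⁻¹ * ((1 - A * Aᴴ) * N⁻¹))) * N =
        (1 - (starRingEnd ℂ α) * α) • (1 - A * Aᴴ) := by
      rw [mul_smul_comm, smul_mul_assoc]
      rw [Matrix.mul_nonsing_inv_cancel_left _ _ hd1, Matrix.nonsing_inv_mul_cancel_right _ _ hd2]
    rw [l1, l2, hm]
  calc 1 - P⁻¹ * (A - (starRingEnd ℂ α) • 1) * ((Aᴴ - α • 1) * N⁻¹)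
      = P⁻¹ * ((P * (1 - P⁻¹ * (A - (starRingEnd ℂ α) • 1) * ((Aᴴ - α • 1) * N⁻¹)) * N) * N⁻¹) :=
        (cancelPN _).symm
    _ = P⁻¹ * ((P * ((1 - (starRingEnd ℂ α) * α) • (P⁻¹ * ((1 - A * Aᴴ) * N⁻¹))) * N) * N⁻¹) := by
        rw [main]
    _ = (1 - (starRingEnd ℂ α) * α) • (P⁻¹ * ((1 - A * Aᴴ) * N⁻¹)) := cancelPN _

lemma dot_MHM {n : ℕ} (M : Matrix (Fin n) (Fin n) ℂ) (v w : Fin n → ℂ) :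
    star v ⬝ᵥ (Mᴴ *ᵥ w) = star (M *ᵥ v) ⬝ᵥ w := by
  rw [Matrix.dotProduct_mulVec, Matrix.star_mulVec]

lemma quad_sub {n : ℕ} (M : Matrix (Fin n) (Fin n) ℂ) (v : Fin n → ℂ) :
    star v ⬝ᵥ ((1 - Mᴴ * M) *ᵥ v) = star v ⬝ᵥ v - star (M *ᵥ v) ⬝ᵥ (M *ᵥ v) := by
  rw [Matrix.sub_mulVec, Matrix.one_mulVec, dotProduct_sub, ← Matrix.mulVec_mulVec, dot_MHM]

lemma dot_self_eq_normsq {n : ℕ} (v : Fin n → ℂ) :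
    star v ⬝ᵥ v = ((‖(WithLp.equiv 2 (Fin n → ℂ)).symm v‖ : ℂ))^2 := by
  rw [dotProduct_comm, ← EuclideanSpace.inner_toLp_toLp, inner_self_eq_norm_sq_to_K]
  norm_num

lemma aux_contr {n : ℕ} {A : Matrix (Fin n) (Fin n) ℂ}
    (h : (1 - Aᴴ * A).PosSemidef) (v : Fin n → ℂ) :
    ‖(WithLp.equiv 2 (Fin n → ℂ)).symm (A *ᵥ v)‖ ≤ ‖(WithLp.equiv 2 (Fin n → ℂ)).symm v‖ := by
  have h2 := h.dotProduct_mulVec_nonneg v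
  rw [quad_sub, dot_self_eq_normsq, dot_self_eq_normsq] at h2
  set a := ‖(WithLp.equiv 2 (Fin n → ℂ)).symm (A *ᵥ v)‖
  set b := ‖(WithLp.equiv 2 (Fin n → ℂ)).symm v‖
  have h3 : (0:ℂ) ≤ ((b^2 - a^2 : ℝ) : ℂ) := by push_cast; exact h2
  rw [← Complex.ofReal_zero, Complex.real_le_real] at h3
  nlinarith [norm_nonneg ((WithLp.equiv 2 (Fin n → ℂ)).symm (A *ᵥ v)),
    norm_nonneg ((WithLp.equiv 2 (Fin n → ℂ)).symm v)]

lemma aux_flip {n : ℕ} {A : Matrix (Fin n) (Fin n) ℂ}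
    (h : (1 - Aᴴ * A).PosSemidef) : (1 - A * Aᴴ).PosSemidef := by
  have key : ∀ v : Fin n → ℂ,
      ‖(WithLp.equiv 2 (Fin n → ℂ)).symm (Aᴴ *ᵥ v)‖ ≤ ‖(WithLp.equiv 2 (Fin n → ℂ)).symm v‖ := by
    intro v
    set a := ‖(WithLp.equiv 2 (Fin n → ℂ)).symm (Aᴴ *ᵥ v)‖ with ha
    set b := ‖(WithLp.equiv 2 (Fin n → ℂ)).symm v‖ with hb
    have e1 : star (Aᴴ *ᵥ v) ⬝ᵥ (Aᴴ *ᵥ v) = star v ⬝ᵥ (A *ᵥ (Aᴴ *ᵥ v)) := by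
      have h5 := dot_MHM Aᴴ v (Aᴴ *ᵥ v)
      rw [conjTranspose_conjTranspose] at h5
      exact h5.symm
    have e2 : (a:ℂ)^2 =
        inner ℂ ((WithLp.equiv 2 (Fin n → ℂ)).symm v)
          ((WithLp.equiv 2 (Fin n → ℂ)).symm (A *ᵥ (Aᴴ *ᵥ v))) := by
      rw [← dot_self_eq_normsq, e1, dotProduct_comm]; rfl
    have e3 : a^2 ≤ b * ‖(WithLp.equiv 2 (Fin n → ℂ)).symm (A *ᵥ (Aᴴ *ᵥ v))‖ := by
      have := norm_inner_le_norm (𝕜 := ℂ) ((WithLp.equiv 2 (Fin n → ℂ)).symm v)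
        ((WithLp.equiv 2 (Fin n → ℂ)).symm (A *ᵥ (Aᴴ *ᵥ v)))
      rw [← e2] at this
      calc a^2 = ‖((a:ℂ))^2‖ := by
            rw [norm_pow, Complex.norm_real, Real.norm_eq_abs, abs_of_nonneg (norm_nonneg _)]
        _ ≤ _ := this
    have e4 : ‖(WithLp.equiv 2 (Fin n → ℂ)).symm (A *ᵥ (Aᴴ *ᵥ v))‖ ≤ a := aux_contr h _
    have hb0 : 0 ≤ b := norm_nonneg _
    have ha0 : 0 ≤ a := norm_nonneg _
    nlinarith
  refine Matrix.PosSemidef.of_dotProduct_mulVec_nonneg ?_ ?_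
  · exact Matrix.isHermitian_one.sub (Matrix.isHermitian_mul_conjTranspose_self A)
  · intro v
    have : star v ⬝ᵥ ((1 - A * Aᴴ) *ᵥ v)
        = star v ⬝ᵥ v - star (Aᴴ *ᵥ v) ⬝ᵥ (Aᴴ *ᵥ v) := by
      have := quad_sub Aᴴ v
      rwa [conjTranspose_conjTranspose] at this
    rw [this, dot_self_eq_normsq, dot_self_eq_normsq]
    have := key v
    have h3 : (0:ℝ) ≤ ‖(WithLp.equiv 2 (Fin n → ℂ)).symm v‖^2
        - ‖(WithLp.equiv 2 (Fin n → ℂ)).symm (Aᴴ *ᵥ v)‖^2 := by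
      nlinarith [norm_nonneg ((WithLp.equiv 2 (Fin n → ℂ)).symm (Aᴴ *ᵥ v))]
    have h4 := Complex.real_le_real.mpr h3
    push_cast at h4
    simpa using h4

lemma aux_psd_smul {n : ℕ} {M : Matrix (Fin n) (Fin n) ℂ} (hM : M.PosSemidef)
    {c : ℂ} (hc : 0 ≤ c) : (c • M).PosSemidef := by
  have him : c.im = 0 := (Complex.nonneg_iff.mp hc).2.symm
  have hstar : star c = c := by
    rw [Complex.star_def, Complex.conj_eq_iff_im]; exact him
  refine Matrix.PosSemidef.of_dotProduct_mulVec_nonneg ?_ ?_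
  · unfold Matrix.IsHermitian
    rw [conjTranspose_smul, hstar, hM.1.eq]
  · intro v
    rw [Matrix.smul_mulVec, dotProduct_smul, smul_eq_mul]
    exact mul_nonneg hc (hM.dotProduct_mulVec_nonneg v)

noncomputable def bfac {n : ℕ} (A : Matrix (Fin n) (Fin n) ℂ) (a : ℂ) :
    Matrix (Fin n) (Fin n) ℂ :=
  (Aᴴ - a • 1) * (1 - (starRingEnd ℂ a) • Aᴴ)⁻¹

lemma dot_MHM' {m n : ℕ} (M : Matrix (Fin m) (Fin n) ℂ) (v : Fin n → ℂ) (w : Fin m → ℂ) :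
    star v ⬝ᵥ (Mᴴ *ᵥ w) = star (M *ᵥ v) ⬝ᵥ w := by
  rw [Matrix.dotProduct_mulVec, Matrix.star_mulVec]

lemma aux_key {n : ℕ} (A : Matrix (Fin n) (Fin n) ℂ)
    (hA_stable : ∀ μ ∈ spectrum ℂ A, ‖μ‖ < 1)
    (C : Matrix (Fin 1) (Fin n) ℂ) (hC : Cᴴ * C = 1 - Aᴴ * A)
    {α z : ℂ} (hα : ‖α‖ < 1) (hz : ‖z‖ < 1) (u : Fin n → ℂ)
    (hu : (1 - A * Aᴴ) *ᵥ ((1 - (starRingEnd ℂ α) • Aᴴ)⁻¹ *ᵥ u) = 0) :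
    (C *ᵥ ((1 - z • A)⁻¹ *ᵥ (bfac A α *ᵥ u))) 0 =
      (z - α) / (1 - (starRingEnd ℂ α) * z) * (C *ᵥ ((1 - z • A)⁻¹ *ᵥ u)) 0 := by
  have hNunit := aux_unitH A hA_stable (show ‖(starRingEnd ℂ α)‖ < 1 by simpa using hα)
  have hNdet : IsUnit (1 - (starRingEnd ℂ α) • Aᴴ).det :=
    (Matrix.isUnit_iff_isUnit_det _).mp hNunit
  have hzunit := aux_unit A hA_stable hz
  have hzdet : IsUnit (1 - z • A).det := (Matrix.isUnit_iff_isUnit_det _).mp hzunit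
  set y : Fin n → ℂ := (1 - (starRingEnd ℂ α) • Aᴴ)⁻¹ *ᵥ u with hydef
  have hy : A *ᵥ (Aᴴ *ᵥ y) = y := by
    have h0 : y - A *ᵥ (Aᴴ *ᵥ y) = 0 := by
      have := hu
      rw [Matrix.sub_mulVec, Matrix.one_mulVec, ← Matrix.mulVec_mulVec] at this
      exact this
    have := sub_eq_zero.mp h0
    exact this.symm
  have huy : (1 - (starRingEnd ℂ α) • Aᴴ) *ᵥ y = u := by
    rw [hydef, Matrix.mulVec_mulVec, Matrix.mul_nonsing_inv _ hNdet, Matrix.one_mulVec]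
  have hbu : bfac A α *ᵥ u = (Aᴴ - α • 1) *ᵥ y := by
    rw [bfac, ← Matrix.mulVec_mulVec]
  -- the key vector identity
  have hvec : (1 - (starRingEnd ℂ α) * z) • ((Aᴴ - α • 1) *ᵥ y) =
      (z - α) • u + (1 - (starRingEnd ℂ α) * α) • ((1 - z • A) *ᵥ (Aᴴ *ᵥ y)) := by
    rw [← huy]
    simp only [Matrix.sub_mulVec, Matrix.one_mulVec, Matrix.smul_mulVec, hy,
      smul_sub, sub_smul, smul_smul, one_smul, smul_add]
    module
  -- C Aᴴ y = 0
  have hCAy : C *ᵥ (Aᴴ *ᵥ y) = 0 := by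
    have h1 : Cᴴ *ᵥ (C *ᵥ (Aᴴ *ᵥ y)) = 0 := by
      rw [Matrix.mulVec_mulVec, hC, Matrix.sub_mulVec, Matrix.one_mulVec,
        ← Matrix.mulVec_mulVec, hy]
      simp
    have h2 : star (C *ᵥ (Aᴴ *ᵥ y)) ⬝ᵥ (C *ᵥ (Aᴴ *ᵥ y)) = 0 := by
      have h3 := congrArg (fun w => star (Aᴴ *ᵥ y) ⬝ᵥ w) h1
      simp only [dotProduct_zero] at h3
      rw [← h3, dot_MHM' C]
    exact dotProduct_star_self_eq_zero.mp h2
  -- apply C (1 - zA)⁻¹ to hvec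
  have happ := congrArg (fun w => (C *ᵥ ((1 - z • A)⁻¹ *ᵥ w)) 0) hvec
  simp only [Matrix.mulVec_smul, Matrix.mulVec_add, Pi.add_apply, Pi.smul_apply,
    smul_eq_mul] at happ
  rw [Matrix.mulVec_mulVec (Aᴴ *ᵥ y) (1 - z • A)⁻¹ (1 - z • A),
    Matrix.nonsing_inv_mul _ hzdet, Matrix.one_mulVec, hCAy] at happ
  simp only [Matrix.mulVec_zero, Pi.zero_apply, mul_zero, add_zero] at happ
  have hden : 1 - (starRingEnd ℂ α) * z ≠ 0 := by
    intro h
    have : ‖(starRingEnd ℂ α) * z‖ < 1 := by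
      rw [norm_mul]
      calc ‖(starRingEnd ℂ α)‖ * ‖z‖ ≤ 1 * ‖z‖ := by
            apply mul_le_mul_of_nonneg_right _ (norm_nonneg z)
            simpa using hα.le
        _ < 1 := by simpa using hz
    rw [sub_eq_zero] at h
    rw [← h] at this
    simp at this
  rw [hbu, div_mul_eq_mul_div, eq_div_iff hden]
  linear_combination happ

noncomputable def bprod {n d : ℕ} (A : Matrix (Fin n) (Fin n) ℂ) (α : Fin d → ℂ) :
    Matrix (Fin n) (Fin n) ℂ :=
  (List.ofFn fun k => bfac A (α k)).prod

lemma bprod_succ {n d : ℕ} (A : Matrix (Fin n) (Fin n) ℂ) (α : Fin (d+1) → ℂ) :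
    bprod A α = bfac A (α 0) * bprod A (α ∘ Fin.succ) := by
  rw [bprod, List.ofFn_succ, List.prod_cons]
  rfl

lemma split_id {n : ℕ} (b Q : Matrix (Fin n) (Fin n) ℂ) :
    1 - (b * Q)ᴴ * (b * Q) = Qᴴ * (1 - bᴴ * b) * Q + (1 - Qᴴ * Q) := by
  simp only [conjTranspose_mul, Matrix.mul_sub, Matrix.sub_mul, Matrix.mul_one,
    Matrix.one_mul, Matrix.mul_assoc]
  abel

lemma psd_bfac {n : ℕ} {A : Matrix (Fin n) (Fin n) ℂ}
    (hA_contr : (1 - Aᴴ * A).PosSemidef)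
    (hA_stable : ∀ μ ∈ spectrum ℂ A, ‖μ‖ < 1) {a : ℂ} (ha : ‖a‖ < 1) :
    (1 - (bfac A a)ᴴ * bfac A a).PosSemidef := by
  have h1 := aux_unit A hA_stable ha
  have h2 := aux_unitH A hA_stable (show ‖(starRingEnd ℂ a)‖ < 1 by simpa using ha)
  rw [bfac, aux_fact A a h1 h2]
  have hconj : (1 - (starRingEnd ℂ a) • Aᴴ)⁻¹ = ((1 - a • A)⁻¹)ᴴ := by
    rw [Matrix.conjTranspose_nonsing_inv]
    congr 1
    simp [conjTranspose_sub, conjTranspose_smul]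
  rw [hconj, ← Matrix.mul_assoc]
  apply aux_psd_smul
  · exact Matrix.PosSemidef.mul_mul_conjTranspose_same (aux_flip hA_contr) _
  · have he : (starRingEnd ℂ a) * a = ((Complex.normSq a : ℝ) : ℂ) := by
      rw [mul_comm, Complex.mul_conj]
    rw [he, ← Complex.ofReal_one, ← Complex.ofReal_sub, ← Complex.ofReal_zero,
      Complex.real_le_real]
    have : Complex.normSq a = ‖a‖^2 := by
      rw [Complex.sq_norm]
    nlinarith [ha, norm_nonneg a]

lemma psd_bprod {n : ℕ} {A : Matrix (Fin n) (Fin n) ℂ}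
    (hA_contr : (1 - Aᴴ * A).PosSemidef)
    (hA_stable : ∀ μ ∈ spectrum ℂ A, ‖μ‖ < 1) :
    ∀ {d : ℕ} (α : Fin d → ℂ), (∀ k, ‖α k‖ < 1) →
      (1 - (bprod A α)ᴴ * bprod A α).PosSemidef := by
  intro d
  induction d with
  | zero =>
    intro α hα
    have h0 : (1 : Matrix (Fin n) (Fin n) ℂ) - (bprod A α)ᴴ * bprod A α = 0 := by
      simp [bprod]
    rw [h0]
    exact ⟨by simp [Matrix.IsHermitian], fun v => by simp⟩
  | succ d IH =>
    intro α hα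
    rw [bprod_succ, split_id]
    exact ((psd_bfac hA_contr hA_stable (hα 0)).conjTranspose_mul_mul_same _).add
      (IH (α ∘ Fin.succ) (fun k => hα k.succ))

lemma aux_prod {n : ℕ} {A : Matrix (Fin n) (Fin n) ℂ}
    (hA_contr : (1 - Aᴴ * A).PosSemidef)
    (hA_stable : ∀ μ ∈ spectrum ℂ A, ‖μ‖ < 1)
    (C : Matrix (Fin 1) (Fin n) ℂ) (hC : Cᴴ * C = 1 - Aᴴ * A) :
    ∀ {d : ℕ} (α : Fin d → ℂ), (∀ k, ‖α k‖ < 1) → ∀ (x : Fin n → ℂ),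
      ((bprod A α)ᴴ * bprod A α) *ᵥ x = x → ∀ {z : ℂ}, ‖z‖ < 1 →
      (C *ᵥ ((1 - z • A)⁻¹ *ᵥ (bprod A α *ᵥ x))) 0 =
        (∏ k, (z - α k) / (1 - (starRingEnd ℂ) (α k) * z)) *
          (C *ᵥ ((1 - z • A)⁻¹ *ᵥ x)) 0 := by
  intro d
  induction d with
  | zero =>
    intro α hα x hx z hz
    simp [bprod, Matrix.one_mulVec]
  | succ d IH =>
    intro α hα x hx z hz
    set b := bfac A (α 0) with hb
    set Q := bprod A (α ∘ Fin.succ) with hQ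
    -- decompose the defect of the product
    have h0 : (Qᴴ * (1 - bᴴ * b) * Q + (1 - Qᴴ * Q)) *ᵥ x = 0 := by
      rw [← split_id]
      rw [bprod_succ] at hx
      rw [Matrix.sub_mulVec, Matrix.one_mulVec, hx, sub_self]
    have hq1 : star x ⬝ᵥ ((Qᴴ * (1 - bᴴ * b) * Q) *ᵥ x) =
        star (Q *ᵥ x) ⬝ᵥ ((1 - bᴴ * b) *ᵥ (Q *ᵥ x)) := by
      rw [← Matrix.mulVec_mulVec, ← Matrix.mulVec_mulVec, dot_MHM' Q]
    have hpsd1 : (1 - bᴴ * b).PosSemidef := psd_bfac hA_contr hA_stable (hα 0)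
    have hpsd1' : (Qᴴ * (1 - bᴴ * b) * Q).PosSemidef := hpsd1.conjTranspose_mul_mul_same _
    have hpsd2 : (1 - Qᴴ * Q).PosSemidef :=
      psd_bprod hA_contr hA_stable (α ∘ Fin.succ) (fun k => hα k.succ)
    have hsum : star x ⬝ᵥ ((Qᴴ * (1 - bᴴ * b) * Q) *ᵥ x) +
        star x ⬝ᵥ ((1 - Qᴴ * Q) *ᵥ x) = 0 := by
      rw [← dotProduct_add, ← Matrix.add_mulVec, h0, dotProduct_zero]
    have ha1 : (0:ℂ) ≤ star x ⬝ᵥ ((Qᴴ * (1 - bᴴ * b) * Q) *ᵥ x) := hpsd1'.dotProduct_mulVec_nonneg x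
    have ha2 : (0:ℂ) ≤ star x ⬝ᵥ ((1 - Qᴴ * Q) *ᵥ x) := hpsd2.dotProduct_mulVec_nonneg x
    have hz1 : star x ⬝ᵥ ((Qᴴ * (1 - bᴴ * b) * Q) *ᵥ x) = 0 := by
      have hle : star x ⬝ᵥ ((Qᴴ * (1 - bᴴ * b) * Q) *ᵥ x) ≤ 0 := by
        have heq : star x ⬝ᵥ ((Qᴴ * (1 - bᴴ * b) * Q) *ᵥ x)
            = -(star x ⬝ᵥ ((1 - Qᴴ * Q) *ᵥ x)) := by linear_combination hsum
        rw [heq]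
        exact neg_nonpos.mpr ha2
      exact le_antisymm hle ha1
    have hz2 : star x ⬝ᵥ ((1 - Qᴴ * Q) *ᵥ x) = 0 := by linear_combination hsum - hz1
    -- induction hypothesis applies
    have hQx : (Qᴴ * Q) *ᵥ x = x := by
      have := (hpsd2.dotProduct_mulVec_zero_iff x).mp hz2
      rw [Matrix.sub_mulVec, Matrix.one_mulVec, sub_eq_zero] at this
      exact this.symm
    have hIH := IH (α ∘ Fin.succ) (fun k => hα k.succ) x hQx hz
    -- factor-level defect annihilates Q x
    have hbQx : (1 - bᴴ * b) *ᵥ (Q *ᵥ x) = 0 := by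
      rw [hq1] at hz1
      exact (hpsd1.dotProduct_mulVec_zero_iff _).mp hz1
    -- convert to the hypothesis of aux_key
    have hu : (1 - A * Aᴴ) *ᵥ ((1 - (starRingEnd ℂ (α 0)) • Aᴴ)⁻¹ *ᵥ (Q *ᵥ x)) = 0 := by
      have h1 := aux_unit A hA_stable (hα 0)
      have h2 := aux_unitH A hA_stable (show ‖(starRingEnd ℂ (α 0))‖ < 1 by simpa using hα 0)
      have hfact := aux_fact A (α 0) h1 h2
      rw [hb, bfac] at hbQx
      rw [hfact] at hbQx
      have hc0 : (1 : ℂ) - (starRingEnd ℂ (α 0)) * (α 0) ≠ 0 := by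
        have he : (starRingEnd ℂ (α 0)) * (α 0) = ((Complex.normSq (α 0) : ℝ) : ℂ) := by
          rw [mul_comm, Complex.mul_conj]
        rw [he]
        intro hcc
        rw [sub_eq_zero] at hcc
        have : Complex.normSq (α 0) = 1 := by exact_mod_cast hcc.symm
        have h2' : Complex.normSq (α 0) = ‖α 0‖^2 := by
          rw [Complex.sq_norm]
        nlinarith [hα 0, norm_nonneg (α 0)]
      rw [Matrix.smul_mulVec, smul_eq_zero] at hbQx
      rcases hbQx with hcc | hbQx
      · exact absurd hcc hc0
      · have h3 : ((1 - (α 0) • A) * ((1 - (α 0) • A)⁻¹ *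
            ((1 - A * Aᴴ) * (1 - (starRingEnd ℂ (α 0)) • Aᴴ)⁻¹))) *ᵥ (Q *ᵥ x) = 0 := by
          rw [← Matrix.mulVec_mulVec, hbQx, Matrix.mulVec_zero]
        rw [Matrix.mul_nonsing_inv_cancel_left _ _ ((Matrix.isUnit_iff_isUnit_det _).mp h1),
          ← Matrix.mulVec_mulVec] at h3
        exact h3
    have hkey := aux_key A hA_stable C hC (hα 0) hz (Q *ᵥ x) hu
    have hbx : bprod A α *ᵥ x = b *ᵥ (Q *ᵥ x) := by
      rw [bprod_succ, ← hb, ← hQ, ← Matrix.mulVec_mulVec]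
    rw [hbx, hkey, hIH, Fin.prod_univ_succ]
    simp only [Function.comp_apply]
    ring
lemma map_mulVec {m k : ℕ} {R S : Type*} [CommRing R] [CommRing S] (f : R →+* S)
    (M : Matrix (Fin m) (Fin k) R) (v : Fin k → R) (i : Fin m) :
    f ((M *ᵥ v) i) = ((M.map f) *ᵥ fun j => f (v j)) i := by
  simp [Matrix.mulVec, dotProduct, map_sum, _root_.map_mul, Matrix.map_apply]

lemma aux_poly {n : ℕ} (A : Matrix (Fin n) (Fin n) ℂ)
    (hA_stable : ∀ μ ∈ spectrum ℂ A, ‖μ‖ < 1)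
    (C : Matrix (Fin 1) (Fin n) ℂ) (w : Fin n → ℂ)
    (h : ∀ z : ℂ, ‖z‖ < 1 → z ≠ 0 → (C *ᵥ ((1 - z • A)⁻¹ *ᵥ w)) 0 = 0) :
    ∀ z : ℂ, ‖z‖ < 1 → (C *ᵥ ((1 - z • A)⁻¹ *ᵥ w)) 0 = 0 := by
  classical
  set Mp : Matrix (Fin n) (Fin n) (Polynomial ℂ) :=
    1 - (Polynomial.X : Polynomial ℂ) • A.map Polynomial.C with hMp
  set p : Polynomial ℂ :=
    ((C.map Polynomial.C) *ᵥ (Mp.adjugate *ᵥ fun i => Polynomial.C (w i))) 0 with hp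
  have hmap : ∀ z : ℂ, Mp.map (Polynomial.evalRingHom z) = 1 - z • A := by
    intro z
    ext i j
    simp [hMp, Matrix.map_apply, Matrix.sub_apply, Matrix.smul_apply, Matrix.one_apply,
      apply_ite, smul_eq_mul]
    ring
  have heval : ∀ z : ℂ, p.eval z = (C *ᵥ ((1 - z • A).adjugate *ᵥ w)) 0 := by
    intro z
    have e0 : p.eval z = (Polynomial.evalRingHom z) p := rfl
    rw [e0, hp, map_mulVec (Polynomial.evalRingHom z)]
    have e1 : (C.map Polynomial.C).map (Polynomial.evalRingHom z) = C := by
      ext i j; simp [Matrix.map_apply]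
    rw [e1]
    congr 1
    funext j
    rw [map_mulVec (Polynomial.evalRingHom z)]
    have e2 : (Mp.adjugate).map (Polynomial.evalRingHom z) = (1 - z • A).adjugate := by
      have := (Polynomial.evalRingHom z).map_adjugate Mp
      rw [RingHom.mapMatrix_apply, RingHom.mapMatrix_apply] at this
      rw [this, hmap]
    rw [e2]
    congr 1
    funext i
    simp
  have hdet : ∀ z : ℂ, ‖z‖ < 1 → (1 - z • A).det ≠ 0 := by
    intro z hz
    have := (Matrix.isUnit_iff_isUnit_det _).mp (aux_unit A hA_stable hz)
    exact this.ne_zero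
  have hadj : ∀ z : ℂ, ‖z‖ < 1 →
      (C *ᵥ ((1 - z • A).adjugate *ᵥ w)) 0 =
        (1 - z • A).det * (C *ᵥ ((1 - z • A)⁻¹ *ᵥ w)) 0 := by
    intro z hz
    have hinv : (1 - z • A)⁻¹ = ((1 - z • A).det)⁻¹ • (1 - z • A).adjugate := by
      rw [Matrix.inv_def, Ring.inverse_eq_inv]
    rw [hinv, Matrix.smul_mulVec, Matrix.mulVec_smul]
    simp only [Pi.smul_apply, smul_eq_mul]
    rw [← mul_assoc, mul_inv_cancel₀ (hdet z hz), one_mul]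
  have hproots : {z : ℂ | ‖z‖ < 1 ∧ z ≠ 0} ⊆ {z | p.IsRoot z} := by
    intro z hzs
    have := h z hzs.1 hzs.2
    unfold Polynomial.IsRoot
    rw [Set.mem_setOf_eq] at *
    rw [heval, hadj z hzs.1, this, mul_zero]
  have hinf : {z : ℂ | ‖z‖ < 1 ∧ z ≠ 0}.Infinite := by
    apply Set.infinite_of_injective_forall_mem
      (f := fun k : ℕ => ((1 : ℂ) / (k + 2 : ℕ)))
    · intro a b hab
      simp only [one_div, _root_.inv_inj, Nat.cast_inj] at hab
      omega
    · intro a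
      have hne : ((a + 2 : ℕ) : ℂ) ≠ 0 := Nat.cast_ne_zero.mpr (by omega)
      refine ⟨?_, one_div_ne_zero hne⟩
      rw [norm_div, norm_one, Complex.norm_natCast, div_lt_one (by positivity)]
      exact_mod_cast by omega
  have hp0 : p = 0 := Polynomial.eq_zero_of_infinite_isRoot p (hinf.mono hproots)
  intro z hz
  have := heval z
  rw [hp0] at this
  simp only [Polynomial.eval_zero] at this
  have h2 := hadj z hz
  rw [← this] at h2
  rcases mul_eq_zero.mp h2.symm with hbad | hgood
  · exact absurd hbad (hdet z hz)
  · exact hgood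


lemma aux_krylov {n : ℕ} (A : Matrix (Fin n) (Fin n) ℂ)
    (hA_stable : ∀ μ ∈ spectrum ℂ A, ‖μ‖ < 1)
    (C : Matrix (Fin 1) (Fin n) ℂ) (hC : Cᴴ * C = 1 - Aᴴ * A)
    (x : Fin n → ℂ) (hx : x ≠ 0)
    (hall : ∀ k : ℕ, C *ᵥ ((A ^ k) *ᵥ x) = 0) : False := by
  set V : Submodule ℂ (Fin n → ℂ) :=
    Submodule.span ℂ (Set.range fun k : ℕ => (A ^ k) *ᵥ x) with hV
  have hxV : x ∈ V := Submodule.subset_span ⟨0, by simp⟩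
  have hAV : ∀ v ∈ V, A.mulVecLin v ∈ V := by
    intro v hv
    have hle : V ≤ V.comap A.mulVecLin := by
      rw [hV, Submodule.span_le]
      rintro _ ⟨k, rfl⟩
      simp only [Submodule.mem_comap, Matrix.mulVecLin_apply, Matrix.mulVec_mulVec, ← pow_succ']
      exact Submodule.subset_span
        ⟨k + 1, by simp [Matrix.mulVecLin_apply, Matrix.mulVec_mulVec, pow_succ']⟩
    exact hle hv
  have hCV : ∀ v ∈ V, C *ᵥ v = 0 := by
    intro v hv
    have hle : V ≤ LinearMap.ker C.mulVecLin := by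
      rw [hV, Submodule.span_le]
      rintro _ ⟨k, rfl⟩
      simp only [Set.mem_setOf_eq, SetLike.mem_coe, LinearMap.mem_ker, Matrix.mulVecLin_apply]
      exact hall k
    simpa [Matrix.mulVecLin_apply] using hle hv
  haveI : Nontrivial ↥V := ⟨⟨x, hxV⟩, 0, by simp [hx]⟩
  obtain ⟨μ, hμ⟩ := Module.End.exists_eigenvalue ((A.mulVecLin).restrict hAV)
  obtain ⟨v, hv⟩ := hμ.exists_hasEigenvector
  have hveq : A *ᵥ (v : Fin n → ℂ) = μ • (v : Fin n → ℂ) := by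
    have h1 := hv.apply_eq_smul
    have h2 := congrArg (Subtype.val) h1
    simpa [LinearMap.restrict_apply] using h2
  have hv0 : (v : Fin n → ℂ) ≠ 0 := by
    intro h
    exact hv.2 (Subtype.ext h)
  have hAAv : (Aᴴ * A) *ᵥ (v : Fin n → ℂ) = (v : Fin n → ℂ) := by
    have h1 : (1 - Aᴴ * A) *ᵥ (v : Fin n → ℂ) = 0 := by
      rw [← hC, ← Matrix.mulVec_mulVec, hCV _ v.2, Matrix.mulVec_zero]
    rw [Matrix.sub_mulVec, Matrix.one_mulVec, sub_eq_zero] at h1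
    exact h1.symm
  have hdot : star (v : Fin n → ℂ) ⬝ᵥ ((Aᴴ * A) *ᵥ (v : Fin n → ℂ)) =
      star (A *ᵥ (v : Fin n → ℂ)) ⬝ᵥ (A *ᵥ (v : Fin n → ℂ)) := by
    rw [← Matrix.mulVec_mulVec, dot_MHM' A]
  have hself : star (v : Fin n → ℂ) ⬝ᵥ (v : Fin n → ℂ) =
      (starRingEnd ℂ μ * μ) * (star (v : Fin n → ℂ) ⬝ᵥ (v : Fin n → ℂ)) := by
    have h6 : star (v : Fin n → ℂ) ⬝ᵥ ((Aᴴ * A) *ᵥ (v : Fin n → ℂ)) =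
        (starRingEnd ℂ μ * μ) * (star (v : Fin n → ℂ) ⬝ᵥ (v : Fin n → ℂ)) := by
      rw [hdot, hveq, star_smul, smul_dotProduct, dotProduct_smul]
      simp only [smul_eq_mul, Complex.star_def]
      ring
    rw [hAAv] at h6
    exact h6
  have hs0 : star (v : Fin n → ℂ) ⬝ᵥ (v : Fin n → ℂ) ≠ 0 := by
    intro h
    exact hv0 (dotProduct_star_self_eq_zero.mp h)
  have hmu : starRingEnd ℂ μ * μ = 1 := by
    have h2 : (starRingEnd ℂ μ * μ - 1) * (star (v : Fin n → ℂ) ⬝ᵥ (v : Fin n → ℂ)) = 0 := by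
      linear_combination -hself
    rcases mul_eq_zero.mp h2 with h3 | h3
    · linear_combination h3
    · exact absurd h3 hs0
  have hnormsq : ‖μ‖^2 = 1 := by
    have h4 : starRingEnd ℂ μ * μ = ((Complex.normSq μ : ℝ) : ℂ) := by
      rw [mul_comm, Complex.mul_conj]
    rw [h4] at hmu
    have h5 : Complex.normSq μ = 1 := by exact_mod_cast hmu
    rw [← h5, Complex.sq_norm]
  have hdet0 : (algebraMap ℂ (Matrix (Fin n) (Fin n) ℂ) μ - A).det = 0 := by
    rw [← Matrix.exists_mulVec_eq_zero_iff]
    refine ⟨(v : Fin n → ℂ), hv0, ?_⟩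
    rw [Algebra.algebraMap_eq_smul_one, Matrix.sub_mulVec, Matrix.smul_mulVec,
      Matrix.one_mulVec, hveq, sub_self]
  have hmem : μ ∈ spectrum ℂ A := by
    rw [spectrum.mem_iff]
    intro hunit
    rw [Matrix.isUnit_iff_isUnit_det, hdet0] at hunit
    simpa using hunit
  have := hA_stable μ hmem
  nlinarith [norm_nonneg μ]

/-- The finite Blaschke product determined by the unimodular constant `ζ` and the
zeros `α 0, …, α (d-1)` in the open unit disc. -/
noncomputable def blaschkeFun {d : ℕ} (ζ : ℂ) (α : Fin d → ℂ) (z : ℂ) : ℂ :=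
  ζ * ∏ k : Fin d, (z - α k) / (1 - (starRingEnd ℂ) (α k) * z)

/-- `φ(A)` for the finite Blaschke product `φ` determined by `ζ` and `α`. -/
noncomputable def blaschkeMatrix {n d : ℕ} (ζ : ℂ) (α : Fin d → ℂ)
    (A : Matrix (Fin n) (Fin n) ℂ) : Matrix (Fin n) (Fin n) ℂ :=
  ζ • (List.ofFn fun k : Fin d =>
    (A - α k • 1) * (1 - (starRingEnd ℂ) (α k) • A)⁻¹).prod

/-- Proposition 4.4: if `A` is a stable contraction with defect index one,
`Cᴴ C = I - Aᴴ A` with `C` a row matrix, `φ` is a finite Blaschke product of degree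
`d < n` and `x ≠ 0` satisfies `φ(Aᴴ)ᴴ φ(Aᴴ) x = x`, then
`φ(z)·(C (I - zA)⁻¹ x) = C (I - zA)⁻¹ φ(Aᴴ) x` on the open unit disc, the function
`z ↦ C (I - zA)⁻¹ x` is not identically zero there, and hence
`φ(z) = (C (I - zA)⁻¹ φ(Aᴴ) x)/(C (I - zA)⁻¹ x)` wherever the denominator is
nonzero. -/
theorem stmt_11 {n d : ℕ}
    (A : Matrix (Fin n) (Fin n) ℂ)
    (hA_contr : (1 - Aᴴ * A).PosSemidef)
    (hA_defect : (1 - Aᴴ * A).rank = 1)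
    (hA_stable : ∀ μ ∈ spectrum ℂ A, ‖μ‖ < 1)
    (C : Matrix (Fin 1) (Fin n) ℂ) (hC : Cᴴ * C = 1 - Aᴴ * A)
    (ζ : ℂ) (hζ : ‖ζ‖ = 1) (α : Fin d → ℂ) (hα : ∀ k, ‖α k‖ < 1)
    (hd : d < n)
    (x : Fin n → ℂ) (hx : x ≠ 0)
    (hx1 : ((blaschkeMatrix ζ α Aᴴ)ᴴ * blaschkeMatrix ζ α Aᴴ) *ᵥ x = x) :
    (∀ z : ℂ, ‖z‖ < 1 →
      blaschkeFun ζ α z * (C *ᵥ ((1 - z • A)⁻¹ *ᵥ x)) 0 =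
        (C *ᵥ ((1 - z • A)⁻¹ *ᵥ (blaschkeMatrix ζ α Aᴴ *ᵥ x))) 0) ∧
    (∃ z : ℂ, ‖z‖ < 1 ∧ (C *ᵥ ((1 - z • A)⁻¹ *ᵥ x)) 0 ≠ 0) ∧
    (∀ z : ℂ, ‖z‖ < 1 → (C *ᵥ ((1 - z • A)⁻¹ *ᵥ x)) 0 ≠ 0 →
      blaschkeFun ζ α z =
        (C *ᵥ ((1 - z • A)⁻¹ *ᵥ (blaschkeMatrix ζ α Aᴴ *ᵥ x))) 0 /
          (C *ᵥ ((1 - z • A)⁻¹ *ᵥ x)) 0) := by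
  have hBM : blaschkeMatrix ζ α Aᴴ = ζ • bprod A α := rfl
  have hζ1 : (star ζ) * ζ = 1 := by
    have h1 : ζ * (starRingEnd ℂ ζ) = ((Complex.normSq ζ : ℝ) : ℂ) := Complex.mul_conj ζ
    rw [mul_comm] at h1
    rw [Complex.star_def, h1]
    have h2 : Complex.normSq ζ = ‖ζ‖^2 := by rw [Complex.sq_norm]
    rw [h2, hζ]
    norm_num
  have hx1' : ((bprod A α)ᴴ * bprod A α) *ᵥ x = x := by
    rw [hBM, conjTranspose_smul, Matrix.smul_mul, Matrix.mul_smul, smul_smul, hζ1,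
      one_smul] at hx1
    exact hx1
  have part1 : ∀ z : ℂ, ‖z‖ < 1 →
      blaschkeFun ζ α z * (C *ᵥ ((1 - z • A)⁻¹ *ᵥ x)) 0 =
        (C *ᵥ ((1 - z • A)⁻¹ *ᵥ (blaschkeMatrix ζ α Aᴴ *ᵥ x))) 0 := by
    intro z hz
    have hp := aux_prod hA_contr hA_stable C hC α hα x hx1' hz
    rw [hBM, Matrix.smul_mulVec, Matrix.mulVec_smul, Matrix.mulVec_smul]
    simp only [Pi.smul_apply, smul_eq_mul]
    rw [hp, blaschkeFun]
    ring
  refine ⟨part1, ?_, ?_⟩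
  · by_contra hcon
    push_neg at hcon
    have hzero : ∀ k : ℕ, ∀ z : ℂ, ‖z‖ < 1 →
        (C *ᵥ ((1 - z • A)⁻¹ *ᵥ ((A ^ k) *ᵥ x))) 0 = 0 := by
      intro k
      induction k with
      | zero =>
        intro z hz
        simpa using hcon z hz
      | succ k IH =>
        apply aux_poly A hA_stable C
        intro z hz hz0
        have h00 := IH 0 (by simp)
        simp only [zero_smul, sub_zero, inv_one, Matrix.one_mulVec] at h00
        have hu := aux_unit A hA_stable hz
        have hdu := (Matrix.isUnit_iff_isUnit_det _).mp hu
        have hid : (1 - z • A)⁻¹ * (z • A) = (1 - z • A)⁻¹ - 1 := by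
          have h3 : (1 - z • A)⁻¹ * (1 - (1 - z • A)) = (1 - z • A)⁻¹ - 1 := by
            rw [Matrix.mul_sub, Matrix.mul_one, Matrix.nonsing_inv_mul _ hdu]
          simpa using h3
        have hmat : z • ((1 - z • A)⁻¹ *ᵥ ((A ^ (k+1)) *ᵥ x)) =
            (1 - z • A)⁻¹ *ᵥ ((A ^ k) *ᵥ x) - (A ^ k) *ᵥ x := by
          calc z • ((1 - z • A)⁻¹ *ᵥ ((A ^ (k+1)) *ᵥ x))
              = z • ((1 - z • A)⁻¹ *ᵥ (A *ᵥ ((A ^ k) *ᵥ x))) := by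
                rw [pow_succ', ← Matrix.mulVec_mulVec]
            _ = (z • ((1 - z • A)⁻¹ * A)) *ᵥ ((A ^ k) *ᵥ x) := by
                rw [Matrix.smul_mulVec, Matrix.mulVec_mulVec]
            _ = ((1 - z • A)⁻¹ * (z • A)) *ᵥ ((A ^ k) *ᵥ x) := by
                rw [mul_smul_comm]
            _ = ((1 - z • A)⁻¹ - 1) *ᵥ ((A ^ k) *ᵥ x) := by rw [hid]
            _ = (1 - z • A)⁻¹ *ᵥ ((A ^ k) *ᵥ x) - (A ^ k) *ᵥ x := by
                rw [Matrix.sub_mulVec, Matrix.one_mulVec]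
        have happly := congrArg (fun w => (C *ᵥ w) 0) hmat
        simp only [Matrix.mulVec_smul, Matrix.mulVec_sub, Pi.smul_apply, Pi.sub_apply,
          smul_eq_mul] at happly
        rw [IH z hz, h00, sub_zero] at happly
        rcases mul_eq_zero.mp happly with h4 | h4
        · exact absurd h4 hz0
        · exact h4
    have hallk : ∀ k : ℕ, C *ᵥ ((A ^ k) *ᵥ x) = 0 := by
      intro k
      have h5 := hzero k 0 (by simp)
      simp only [zero_smul, sub_zero, inv_one, Matrix.one_mulVec] at h5
      funext i
      have hi : i = 0 := Subsingleton.elim i 0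
      rw [hi, Pi.zero_apply]
      exact h5
    exact aux_krylov A hA_stable C hC x hx hallk
  · intro z hz hden
    rw [eq_div_iff hden]
    exact part1 z hz
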